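/- Let k ≥ 1 and T be positive integers with T > (k+1)·log₂ n, and let F : V × V → ℕ be the edge-multiplicity function of an acyclic directed multigraph on a vertex set V of n vertices containing s and t, such that F is the (edge-multiplicity) sum of k·T directed paths from s to t, and every vertex of V lies on at least T − log₂ n of these paths. Then there exist k directed s-t paths, each a sequence of vertices in which every consecutive pair (u,w) satisfies F(u,w) ≥ 1, such that every vertex of V lies on at least one of the k paths and each ordered pair (u,w) is traversed at most k·F(u,w) times in total across all k paths (i.e., each edge of F is used at most k times). (The existence assertion of the paper's Lemma 5.1.) -/

import Mathlib

open Finset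

/-- The number of times the ordered pair `(a, b)` occurs as a consecutive pair
of vertices in the walk `p`. -/
def pathEdges {V : Type*} [DecidableEq V] (p : List V) (a b : V) : ℕ :=
  (p.zip p.tail).count (a, b)

/-- The multigraph with edge multiplicities `F` contains a directed cycle all
of whose edges have positive multiplicity. -/
def HasPosCycle {V : Type*} (F : V → V → ℕ) : Prop :=
  ∃ (v : V) (c : List V), List.Chain (fun a b => 1 ≤ F a b) v (c ++ [v])

set_option linter.unusedSectionVars false


section Walks
variable {α : Type*} {e : α → α → Prop}

/-- `p` is a walk of `e` from `u` to `v`. -/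
def IsWalkE (e : α → α → Prop) (p : List α) (u v : α) : Prop :=
  p.head? = some u ∧ p.getLast? = some v ∧ p.Chain' e

lemma isWalkE_singleton (u : α) : IsWalkE e [u] u u := by
  refine ⟨rfl, rfl, ?_⟩ ; exact List.isChain_singleton u

lemma IsWalkE.ne_nil {p : List α} {u v : α} (h : IsWalkE e p u v) : p ≠ [] := by
  intro hp; rw [hp] at h; simp [IsWalkE] at h

lemma IsWalkE.cons_eq {p : List α} {u v : α} (h : IsWalkE e p u v) :
    p = u :: p.tail := by
  cases p with
  | nil => simp [IsWalkE] at h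
  | cons a q => obtain ⟨h1, _, _⟩ := h; simp at h1; simp [h1]

lemma IsWalkE.mem_left {p : List α} {u v : α} (h : IsWalkE e p u v) : u ∈ p := by
  rw [h.cons_eq]; exact List.mem_cons_self

lemma IsWalkE.mem_right {p : List α} {u v : α} (h : IsWalkE e p u v) : v ∈ p :=
  List.mem_of_mem_getLast? (by rw [h.2.1]; rfl)

lemma IsWalkE.glue {p q : List α} {u v w : α}
    (hp : IsWalkE e p u v) (hq : IsWalkE e q v w) :
    ∃ pq, IsWalkE e pq u w ∧ (∀ x ∈ p, x ∈ pq) ∧ (∀ x ∈ q, x ∈ pq) := by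
  obtain ⟨hp1, hp2, hp3⟩ := hp
  have hvp : v ∈ p := List.mem_of_mem_getLast? (by rw [hp2]; rfl)
  rcases hq with ⟨hq1, hq2, hq3⟩
  cases q with
  | nil => simp at hq1
  | cons a r =>
    have hav : a = v := by simpa using hq1
    subst hav
    cases r with
    | nil =>
      have hwa : w = a := by simpa using hq2.symm
      subst hwa
      exact ⟨p, ⟨hp1, hp2, hp3⟩, fun x hx => hx, by intro x hx; simp at hx; subst hx; exact hvp⟩
    | cons b r' =>
      refine ⟨p ++ (b :: r'), ⟨?_, ?_, ?_⟩, ?_, ?_⟩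
      · rw [List.head?_append_of_ne_nil]
        · exact hp1
        · intro h; rw [h] at hp1; simp at hp1
      · rw [List.getLast?_append_of_ne_nil _ (by simp)]
        rw [← hq2, List.getLast?_cons_cons]
      · apply List.IsChain.append hp3 ((List.isChain_cons_cons.mp hq3).2)
        intro x hx y hy
        rw [hp2] at hx; simp at hx hy; subst hx; subst hy
        exact (List.isChain_cons_cons.mp hq3).1
      · intro x hx; exact List.mem_append_left _ hx
      · intro x hx
        rcases List.mem_cons.mp hx with rfl | h
        · exact List.mem_append_left _ hvp
        · exact List.mem_append_right _ h

lemma walk_of_rtg {u v : α} (h : Relation.ReflTransGen e u v) :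
    ∃ p, IsWalkE e p u v := by
  induction h with
  | refl => exact ⟨[u], isWalkE_singleton u⟩
  | tail _ hbc ih =>
    obtain ⟨p, hp⟩ := ih
    rename_i b c _
    refine ⟨p ++ [c], ?_, ?_, ?_⟩
    · rw [List.head?_append_of_ne_nil _ hp.ne_nil]; exact hp.1
    · simp
    · apply List.IsChain.append hp.2.2 (List.isChain_singleton c)
      intro x hx y hy
      rw [hp.2.1] at hx; simp at hx hy; subst hx; subst hy; exact hbc

lemma IsWalkE.head_rtg {p : List α} {u v : α} (h : IsWalkE e p u v) :
    ∀ x ∈ p, Relation.ReflTransGen e u x := by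
  induction p generalizing u with
  | nil => simp
  | cons a q ih =>
    have hu : a = u := by have := h.1; simpa using this
    subst hu
    intro x hx
    rcases List.mem_cons.mp hx with rfl | hx'
    · exact Relation.ReflTransGen.refl
    · have hq : q ≠ [] := by rintro rfl; simp at hx'
      obtain ⟨b, r, rfl⟩ := List.exists_cons_of_ne_nil hq
      have hab : e a b := (List.isChain_cons_cons.mp h.2.2).1
      have hw : IsWalkE e (b :: r) b v :=
        ⟨rfl, by rw [← h.2.1, List.getLast?_cons_cons], (List.isChain_cons_cons.mp h.2.2).2⟩
      exact Relation.ReflTransGen.head hab (ih hw x hx')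

lemma IsWalkE.rtg_last {p : List α} {u v : α} (h : IsWalkE e p u v) :
    ∀ x ∈ p, Relation.ReflTransGen e x v := by
  induction p generalizing u with
  | nil => simp
  | cons a q ih =>
    have hu : a = u := by have := h.1; simpa using this
    subst hu
    intro x hx
    cases hq : q with
    | nil =>
      subst hq
      have : v = a := by have := h.2.1; simpa using this.symm
      subst this
      simp at hx; subst hx; exact Relation.ReflTransGen.refl
    | cons b r =>
      subst hq
      have hab : e a b := (List.isChain_cons_cons.mp h.2.2).1
      have hw : IsWalkE e (b :: r) b v :=
        ⟨rfl, by rw [← h.2.1, List.getLast?_cons_cons], (List.isChain_cons_cons.mp h.2.2).2⟩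
      rcases List.mem_cons.mp hx with rfl | hx'
      · exact Relation.ReflTransGen.head hab (ih hw b List.mem_cons_self)
      · exact ih hw x hx'

lemma rtg_eq_or_tg {u v : α} (h : Relation.ReflTransGen e u v) :
    u = v ∨ Relation.TransGen e u v := by
  rcases h.cases_head with h' | ⟨c, hc, hcv⟩
  · exact Or.inl h'
  · exact Or.inr (Relation.TransGen.head' hc hcv)

lemma IsWalkE.comparable {p : List α} {u v : α} (h : IsWalkE e p u v) :
    ∀ x ∈ p, ∀ y ∈ p, x = y ∨ Relation.TransGen e x y ∨ Relation.TransGen e y x := by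
  induction p generalizing u with
  | nil => simp
  | cons a q ih =>
    have hu : a = u := by have := h.1; simpa using this
    subst hu
    intro x hx y hy
    rcases List.mem_cons.mp hx with rfl | hx' <;> rcases List.mem_cons.mp hy with h2 | hy'
    · exact Or.inl h2.symm
    · rcases rtg_eq_or_tg (h.head_rtg y hy) with h' | h'
      · exact Or.inl h'
      · exact Or.inr (Or.inl h')
    · subst h2
      rcases rtg_eq_or_tg (h.head_rtg x hx) with h' | h'
      · exact Or.inl h'.symm
      · exact Or.inr (Or.inr h')
    · have hq : q ≠ [] := by rintro rfl; simp at hx'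
      obtain ⟨b, r, rfl⟩ := List.exists_cons_of_ne_nil hq
      have hw : IsWalkE e (b :: r) b v :=
        ⟨rfl, by rw [← h.2.1, List.getLast?_cons_cons], (List.isChain_cons_cons.mp h.2.2).2⟩
      exact ih hw x hx' y hy'

lemma IsWalkE.nodup {p : List α} {u v : α}
    (hirr : ∀ x : α, ¬ Relation.TransGen e x x) (h : IsWalkE e p u v) :
    p.Nodup := by
  induction p generalizing u with
  | nil => simp
  | cons a q ih =>
    have hu : a = u := by have := h.1; simpa using this
    subst hu
    cases hq : q with
    | nil => simp
    | cons b r =>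
      subst hq
      have hab : e a b := (List.isChain_cons_cons.mp h.2.2).1
      have hw : IsWalkE e (b :: r) b v :=
        ⟨rfl, by rw [← h.2.1, List.getLast?_cons_cons], (List.isChain_cons_cons.mp h.2.2).2⟩
      refine List.nodup_cons.mpr ⟨?_, ih hw⟩
      intro hmem
      exact hirr a (Relation.TransGen.head' hab (hw.head_rtg a hmem))

lemma tg_iff_chain {u v : α} :
    Relation.TransGen e u v ↔ ∃ l, List.Chain e u (l ++ [v]) := by
  constructor
  · intro h
    induction h with
    | single h' => exact ⟨[], List.isChain_pair.mpr h'⟩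
    | tail _ hbc ih =>
      obtain ⟨l, hl⟩ := ih
      rename_i b c _
      refine ⟨l ++ [b], ?_⟩
      rw [List.append_assoc]
      exact (List.isChain_cons_split.mpr ⟨hl, List.isChain_pair.mpr hbc⟩)
  · rintro ⟨l, hl⟩
    induction l generalizing u with
    | nil => simp at hl; exact Relation.TransGen.single (List.isChain_pair.mp hl)
    | cons a l' ih =>
      rw [List.cons_append] at hl; replace hl := List.isChain_cons_cons.mp hl
      exact Relation.TransGen.head hl.1 (ih hl.2)

end Walks

section Dilworth
variable {α : Type*} [DecidableEq α] {r : α → α → Prop}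

lemma exists_min_wrt (htr : Transitive r) (hirr : Irreflexive r) :
    ∀ S : Finset α, S.Nonempty → ∃ m ∈ S, ∀ z ∈ S, ¬ r z m := by
  classical
  intro S
  induction S using Finset.strongInduction with
  | _ S ih =>
    intro hS
    obtain ⟨x, hx⟩ := hS
    by_cases hx' : ∀ z ∈ S, ¬ r z x
    · exact ⟨x, hx, hx'⟩
    · push_neg at hx'
      obtain ⟨z, hz, hzx⟩ := hx'
      have hsub : S.filter (fun w => r w x) ⊂ S := by
        refine Finset.ssubset_iff_of_subset (Finset.filter_subset _ _) |>.mpr ?_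
        exact ⟨x, hx, by simp [hirr x]⟩
      obtain ⟨m, hm, hmin⟩ := ih _ hsub ⟨z, by simp [hz, hzx]⟩
      have hmx : r m x := (Finset.mem_filter.mp hm).2
      refine ⟨m, Finset.filter_subset _ _ hm, ?_⟩
      intro w hw hwm
      exact hmin w (Finset.mem_filter.mpr ⟨hw, htr hwm hmx⟩) hwm

lemma exists_max_wrt (htr : Transitive r) (hirr : Irreflexive r)
    (S : Finset α) (hS : S.Nonempty) : ∃ m ∈ S, ∀ z ∈ S, ¬ r m z := by
  have := exists_min_wrt (r := flip r) (fun _ _ _ h h' => htr h' h) hirr S hS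
  simpa [flip] using this

lemma dilworth (htr : Transitive r) (hirr : Irreflexive r) :
    ∀ (S : Finset α) (k : ℕ),
      (∀ A ⊆ S, (∀ a ∈ A, ∀ b ∈ A, a ≠ b → ¬ r a b) → A.card ≤ k) →
      ∃ f : α → ℕ, (∀ x ∈ S, f x < k) ∧
        (∀ x ∈ S, ∀ y ∈ S, f x = f y → x = y ∨ r x y ∨ r y x) := by
  classical
  intro S
  induction S using Finset.strongInduction with
  | _ S ih =>
    intro k hw
    rcases Finset.eq_empty_or_nonempty S with rfl | hS
    · exact ⟨fun _ => 0, by simp, by simp⟩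
    have hk1 : 1 ≤ k := by
      obtain ⟨x, hx⟩ := hS
      have := hw {x} (by simpa using hx) (by simp)
      simpa using this
    -- maximal element y, minimal element x ≤ y
    obtain ⟨y, hyS, hymax⟩ := exists_max_wrt htr hirr S hS
    obtain ⟨x, hxT, hxmin'⟩ := exists_min_wrt htr hirr
      (S.filter (fun z => z = y ∨ r z y)) ⟨y, by simp [hyS]⟩
    have hxS : x ∈ S := (Finset.mem_filter.mp hxT).1
    have hxy : x = y ∨ r x y := (Finset.mem_filter.mp hxT).2
    have hxmin : ∀ z ∈ S, ¬ r z x := by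
      intro z hz hzx
      refine hxmin' z (Finset.mem_filter.mpr ⟨hz, ?_⟩) hzx
      rcases hxy with rfl | h
      · exact Or.inr hzx
      · exact Or.inr (htr hzx h)
    set C : Finset α := {x, y} with hC
    have hxC : x ∈ C := by simp [hC]
    have hyC : y ∈ C := by simp [hC]
    have hCS : C ⊆ S := by
      intro z hz; rcases Finset.mem_insert.mp hz with rfl | hz
      · exact hxS
      · simp at hz; subst hz; exact hyS
    have hSmC : S \ C ⊂ S := by
      refine Finset.ssubset_iff_of_subset (Finset.sdiff_subset) |>.mpr ?_
      exact ⟨x, hxS, fun hmem => (Finset.mem_sdiff.mp hmem).2 hxC⟩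
    by_cases hA : ∃ A ⊆ S \ C, (∀ a ∈ A, ∀ b ∈ A, a ≠ b → ¬ r a b) ∧ A.card = k
    · obtain ⟨A, hAsub, hAanti, hAcard⟩ := hA
      have hAS : A ⊆ S := hAsub.trans Finset.sdiff_subset
      set Sm : Finset α := S.filter (fun z => ∃ a ∈ A, z = a ∨ r z a) with hSm
      set Sp : Finset α := S.filter (fun z => ∃ a ∈ A, a = z ∨ r a z) with hSp
      have hASm : A ⊆ Sm := fun a ha =>
        Finset.mem_filter.mpr ⟨hAS ha, ⟨a, ha, Or.inl rfl⟩⟩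
      have hASp : A ⊆ Sp := fun a ha =>
        Finset.mem_filter.mpr ⟨hAS ha, ⟨a, ha, Or.inl rfl⟩⟩
      have hySm : y ∉ Sm := by
        intro hy
        obtain ⟨a, haA, h⟩ := (Finset.mem_filter.mp hy).2
        rcases h with rfl | h
        · exact absurd (hAsub haA) (by simp [hyC])
        · exact hymax a (hAS haA) h
      have hxSp : x ∉ Sp := by
        intro hx
        obtain ⟨a, haA, h⟩ := (Finset.mem_filter.mp hx).2
        rcases h with rfl | h
        · exact absurd (hAsub haA) (by simp [hxC])
        · exact hxmin a (hAS haA) h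
      have hcup : ∀ z ∈ S, z ∈ Sm ∨ z ∈ Sp := by
        intro z hz
        by_contra hcon
        push_neg at hcon
        have hzA : z ∉ A := fun h => hcon.1 (hASm h)
        have : (insert z A).card ≤ k := by
          apply hw _ (Finset.insert_subset hz hAS)
          intro a ha b hb hab
          rcases Finset.mem_insert.mp ha with rfl | ha' <;>
            rcases Finset.mem_insert.mp hb with rfl | hb'
          · exact absurd rfl hab
          · intro hzb
            exact hcon.1 (Finset.mem_filter.mpr ⟨hz, ⟨b, hb', Or.inr hzb⟩⟩)
          · intro haz
            exact hcon.2 (Finset.mem_filter.mpr ⟨hz, ⟨a, ha', Or.inr haz⟩⟩)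
          · exact hAanti a ha' b hb' hab
        rw [Finset.card_insert_of_notMem hzA, hAcard] at this
        omega
      have hSmS : Sm ⊂ S := Finset.ssubset_iff_of_subset (Finset.filter_subset _ _)
        |>.mpr ⟨y, hyS, hySm⟩
      have hSpS : Sp ⊂ S := Finset.ssubset_iff_of_subset (Finset.filter_subset _ _)
        |>.mpr ⟨x, hxS, hxSp⟩
      obtain ⟨fm, hfm1, hfm2⟩ := ih Sm hSmS k
        (fun B hB hanti => hw B (hB.trans (Finset.filter_subset _ _)) hanti)
      obtain ⟨fp, hfp1, hfp2⟩ := ih Sp hSpS k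
        (fun B hB hanti => hw B (hB.trans (Finset.filter_subset _ _)) hanti)
      -- fm, fp are injective on A
      have hinjm : ∀ a ∈ A, ∀ b ∈ A, fm a = fm b → a = b := by
        intro a ha b hb hfab
        rcases hfm2 a (hASm ha) b (hASm hb) hfab with h | h | h
        · exact h
        · by_contra hne; exact hAanti a ha b hb hne h
        · by_contra hne; exact hAanti b hb a ha (Ne.symm hne) h
      have hinjp : ∀ a ∈ A, ∀ b ∈ A, fp a = fp b → a = b := by
        intro a ha b hb hfab
        rcases hfp2 a (hASp ha) b (hASp hb) hfab with h | h | h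
        · exact h
        · by_contra hne; exact hAanti a ha b hb hne h
        · by_contra hne; exact hAanti b hb a ha (Ne.symm hne) h
      have hsurj : ∀ z ∈ Sp, ∃ a ∈ A, fp a = fp z := by
        intro z hz
        have himg : A.image fp = Finset.range k := by
          apply Finset.eq_of_subset_of_card_le
          · intro m hm
            obtain ⟨a, ha, rfl⟩ := Finset.mem_image.mp hm
            exact Finset.mem_range.mpr (hfp1 a (hASp ha))
          · rw [Finset.card_range, Finset.card_image_of_injOn (fun a ha b hb => hinjp a ha b hb), hAcard]
        have : fp z ∈ A.image fp := by
          rw [himg]; exact Finset.mem_range.mpr (hfp1 z hz)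
        obtain ⟨a, ha, hfa⟩ := Finset.mem_image.mp this
        exact ⟨a, ha, hfa⟩
      -- the pick function
      have hpick : ∀ z ∈ S, z ∉ Sm → ∃ a ∈ A, fp a = fp z ∧ (a = z ∨ r a z) := by
        intro z hz hzm
        have hzp : z ∈ Sp := (hcup z hz).resolve_left hzm
        obtain ⟨a, ha, hfa⟩ := hsurj z hzp
        refine ⟨a, ha, hfa, ?_⟩
        rcases hfp2 a (hASp ha) z hzp hfa with h | h | h
        · exact Or.inl h
        · exact Or.inr h
        · exact absurd (Finset.mem_filter.mpr ⟨hz, ⟨a, ha, Or.inr h⟩⟩) hzm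
      choose pick hpickA hpickf hpickr using hpick
      set f : α → ℕ := fun z =>
        if hz : z ∈ S ∧ z ∉ Sm then fm (pick z hz.1 hz.2) else fm z with hf
      -- key: z in Sm with fm z = fm a for a ∈ A implies z ≤ a
      have hbelow : ∀ z ∈ Sm, ∀ a ∈ A, fm z = fm a → z = a ∨ r z a := by
        intro z hz a ha hfz
        rcases hfm2 z hz a (hASm ha) hfz with h | h | h
        · exact Or.inl h
        · exact Or.inr h
        · -- r a z impossible
          exfalso
          obtain ⟨a', ha', hza'⟩ := (Finset.mem_filter.mp hz).2
          rcases hza' with rfl | hza'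
          · rcases eq_or_ne a z with rfl | hne
            · exact hirr a h
            · exact hAanti a ha z ha' hne h
          · have : r a a' := htr h hza'
            rcases eq_or_ne a a' with rfl | hne
            · exact hirr a this
            · exact hAanti a ha a' ha' hne this
      refine ⟨f, ?_, ?_⟩
      · intro z hz
        by_cases hzm : z ∈ Sm
        · have : f z = fm z := by simp [hf, hzm]
          rw [this]; exact hfm1 z hzm
        · have : f z = fm (pick z hz hzm) := by simp [hf, hz, hzm]
          rw [this]; exact hfm1 _ (hASm (hpickA z hz hzm))
      · intro z hz w hw hfzw
        by_cases hzm : z ∈ Sm <;> by_cases hwm : w ∈ Sm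
        · have h1 : f z = fm z := by simp [hf, hzm]
          have h2 : f w = fm w := by simp [hf, hwm]
          exact hfm2 z hzm w hwm (by rw [← h1, ← h2, hfzw])
        · -- z ∈ Sm, w ∉ Sm : z ≤ a_w ≤ w
          have h1 : f z = fm z := by simp [hf, hzm]
          have h2 : f w = fm (pick w hw hwm) := by simp [hf, hw, hwm]
          have haw := hpickA w hw hwm
          have hza : z = pick w hw hwm ∨ r z (pick w hw hwm) :=
            hbelow z hzm _ haw (by rw [← h1, hfzw, h2])
          have hawle : pick w hw hwm = w ∨ r (pick w hw hwm) w := hpickr w hw hwm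
          rcases hza with hza | hza <;> rcases hawle with h | h
          · exact Or.inl (hza.trans h)
          · exact Or.inr (Or.inl (hza ▸ h))
          · exact Or.inr (Or.inl (h ▸ hza))
          · exact Or.inr (Or.inl (htr hza h))
        · -- symmetric
          have h1 : f w = fm w := by simp [hf, hwm]
          have h2 : f z = fm (pick z hz hzm) := by simp [hf, hz, hzm]
          have haz := hpickA z hz hzm
          have hwa : w = pick z hz hzm ∨ r w (pick z hz hzm) :=
            hbelow w hwm _ haz (by rw [← h1, ← hfzw, h2])
          have hazle : pick z hz hzm = z ∨ r (pick z hz hzm) z := hpickr z hz hzm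
          rcases hwa with hwa | hwa <;> rcases hazle with h | h
          · exact Or.inl (hwa.trans h).symm
          · exact Or.inr (Or.inr (hwa ▸ h))
          · exact Or.inr (Or.inr (h ▸ hwa))
          · exact Or.inr (Or.inr (htr hwa h))
        · -- both outside Sm
          have h1 : f z = fm (pick z hz hzm) := by simp [hf, hz, hzm]
          have h2 : f w = fm (pick w hw hwm) := by simp [hf, hw, hwm]
          have : pick z hz hzm = pick w hw hwm :=
            hinjm _ (hpickA z hz hzm) _ (hpickA w hw hwm) (by rw [← h1, hfzw, h2])
          have hfpzw : fp z = fp w := by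
            rw [← hpickf z hz hzm, this, hpickf w hw hwm]
          have hzp : z ∈ Sp := (hcup z hz).resolve_left hzm
          have hwp : w ∈ Sp := (hcup w hw).resolve_left hwm
          exact hfp2 z hzp w hwp hfpzw
    · -- no antichain of size k in S \ C
      have hw' : ∀ B ⊆ S \ C, (∀ a ∈ B, ∀ b ∈ B, a ≠ b → ¬ r a b) → B.card ≤ k - 1 := by
        intro B hB hanti
        have h1 : B.card ≤ k := hw B (hB.trans Finset.sdiff_subset) hanti
        have h2 : B.card ≠ k := fun h => hA ⟨B, hB, hanti, h⟩
        omega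
      obtain ⟨f', hf'1, hf'2⟩ := ih (S \ C) hSmC (k - 1) hw'
      refine ⟨fun z => if z ∈ C then k - 1 else f' z, ?_, ?_⟩
      · intro z hz
        by_cases hzC : z ∈ C
        · simp [hzC]; omega
        · simp [hzC]
          have := hf'1 z (Finset.mem_sdiff.mpr ⟨hz, hzC⟩)
          omega
      · intro z hz w hw' hfzw
        by_cases hzC : z ∈ C <;> by_cases hwC : w ∈ C
        · -- both in C = {x, y}
          simp [hC] at hzC hwC
          rcases hzC with rfl | rfl <;> rcases hwC with h | h
          · exact Or.inl h.symm
          · subst h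
            rcases hxy with h' | h'
            · exact Or.inl h'
            · exact Or.inr (Or.inl h')
          · subst h
            rcases hxy with h' | h'
            · exact Or.inl h'.symm
            · exact Or.inr (Or.inr h')
          · subst h; exact Or.inl rfl
        · exfalso
          simp [hzC, hwC] at hfzw
          have := hf'1 w (Finset.mem_sdiff.mpr ⟨hw', hwC⟩)
          omega
        · exfalso
          simp [hzC, hwC] at hfzw
          have := hf'1 z (Finset.mem_sdiff.mpr ⟨hz, hzC⟩)
          omega
        · simp [hzC, hwC] at hfzw
          exact hf'2 z (Finset.mem_sdiff.mpr ⟨hz, hzC⟩) w (Finset.mem_sdiff.mpr ⟨hw', hwC⟩) hfzw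

end Dilworth

section Assemble
variable {α : Type*} [DecidableEq α] {r : α → α → Prop}

lemma finset_chain_to_list (htr : Transitive r) (hirr : Irreflexive r) :
    ∀ C : Finset α, (∀ a ∈ C, ∀ b ∈ C, a = b ∨ r a b ∨ r b a) →
      ∃ l : List α, l.Chain' r ∧ ∀ x, x ∈ l ↔ x ∈ C := by
  intro C
  induction C using Finset.strongInduction with
  | _ C ih =>
    intro hC
    rcases Finset.eq_empty_or_nonempty C with rfl | hne
    · exact ⟨[], List.isChain_nil, by simp⟩
    obtain ⟨m, hm, hmin⟩ := exists_min_wrt htr hirr C hne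
    obtain ⟨l', hl'c, hl'mem⟩ := ih (C.erase m) (Finset.erase_ssubset hm)
      (fun a ha b hb => hC a (Finset.mem_of_mem_erase ha) b (Finset.mem_of_mem_erase hb))
    refine ⟨m :: l', ?_, ?_⟩
    · apply List.isChain_cons.mpr
      refine ⟨?_, hl'c⟩
      intro y hy
      have hyl : y ∈ l' := List.mem_of_mem_head? hy
      have hyC : y ∈ C.erase m := (hl'mem y).mp hyl
      rcases hC m hm y (Finset.mem_of_mem_erase hyC) with h | h | h
      · exact absurd h.symm (Finset.ne_of_mem_erase hyC)
      · exact h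
      · exact absurd h (hmin y (Finset.mem_of_mem_erase hyC))
    · intro z
      rw [List.mem_cons, hl'mem z, Finset.mem_erase]
      constructor
      · rintro (rfl | ⟨_, h⟩)
        · exact hm
        · exact h
      · intro hz
        rcases eq_or_ne z m with rfl | hne'
        · exact Or.inl rfl
        · exact Or.inr ⟨hne', hz⟩

end Assemble

section ChainWalk
variable {α : Type*} {e : α → α → Prop}

lemma chain_through :
    ∀ (c : List α) (v t : α), List.Chain' (Relation.TransGen e) (v :: c) →
      (∀ x ∈ v :: c, Relation.ReflTransGen e x t) →
      ∃ p, IsWalkE e p v t ∧ ∀ x ∈ v :: c, x ∈ p := by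
  intro c
  induction c with
  | nil =>
    intro v t _ hrtg
    obtain ⟨p, hp⟩ := walk_of_rtg (hrtg v (by simp))
    refine ⟨p, hp, ?_⟩
    intro x hx
    simp at hx; subst hx; exact hp.mem_left
  | cons w c' ih =>
    intro v t hch hrtg
    have hvw : Relation.TransGen e v w := (List.isChain_cons_cons.mp hch).1
    obtain ⟨l, hl⟩ := tg_iff_chain.mp hvw
    have hw1 : IsWalkE e (v :: (l ++ [w])) v w := by
      refine ⟨rfl, ?_, ?_⟩
      · rw [show v :: (l ++ [w]) = (v :: l) ++ [w] by simp]
        exact List.getLast?_concat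
      · exact hl
    obtain ⟨p2, hp2, hp2mem⟩ := ih w t (List.isChain_cons_cons.mp hch).2
      (fun x hx => hrtg x (List.mem_cons_of_mem _ hx))
    obtain ⟨pq, hpq, hmem1, hmem2⟩ := hw1.glue hp2
    refine ⟨pq, hpq, ?_⟩
    intro x hx
    rcases List.mem_cons.mp hx with rfl | hx'
    · exact hmem1 x (by simp)
    · exact hmem2 x (hp2mem x hx')

end ChainWalk


section Walks2
variable {α : Type*} {e : α → α → Prop}


lemma chain'_of_zip : ∀ p : List α, (∀ ab ∈ p.zip p.tail, e ab.1 ab.2) → p.Chain' e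
  | [], _ => by exact List.isChain_nil
  | [_], _ => by exact List.isChain_singleton _
  | x :: y :: rest, h => by
    apply List.isChain_cons_cons.mpr
    refine ⟨h (x, y) (by simp), chain'_of_zip (y :: rest) ?_⟩
    intro ab hab
    exact h ab (by simpa using Or.inr hab)

lemma zip_mem_chain' : ∀ p : List α, p.Chain' e → ∀ ab ∈ p.zip p.tail, e ab.1 ab.2
  | [], _ => by simp
  | [_], _ => by simp
  | x :: y :: rest, h => by
    intro ab hab
    rcases (by simpa using hab : ab = (x, y) ∨ ab ∈ (y :: rest).zip rest) with rfl | hab'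
    · exact (List.isChain_cons_cons.mp h).1
    · exact zip_mem_chain' (y :: rest) (List.isChain_cons_cons.mp h).2 ab hab'

lemma count_le_one_of_nodup' {β : Type*} [BEq β] [LawfulBEq β] {l : List β} (h : l.Nodup) (a : β) :
    l.count a ≤ 1 := by
  induction l with
  | nil => simp
  | cons x xs ih =>
    rcases List.nodup_cons.mp h with ⟨hx, hxs⟩
    rw [List.count_cons]
    by_cases hax : a = x
    · subst hax
      rw [List.count_eq_zero_of_not_mem hx]
      simp
    · have : (x == a) = false := beq_false_of_ne (Ne.symm hax)
      rw [this]
      simpa using ih hxs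

lemma pathEdges_le_one {V : Type*} [DecidableEq V] {p : List V} (hnd : p.Nodup) (a b : V) :
    pathEdges p a b ≤ 1 := by
  have hlen : p.tail.length ≤ p.length := by
    cases p <;> simp
  have hmap : (p.zip p.tail).map Prod.snd = p.tail := List.map_snd_zip hlen
  have hzn : (p.zip p.tail).Nodup := by
    apply List.Nodup.of_map Prod.snd
    rw [hmap]
    exact hnd.sublist (List.tail_sublist p)
  rw [pathEdges]
  exact count_le_one_of_nodup' hzn (a, b)

lemma pathEdges_pos_iff {V : Type*} [DecidableEq V] {p : List V} {a b : V} :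
    1 ≤ pathEdges p a b ↔ (a, b) ∈ p.zip p.tail := by
  rw [pathEdges, Nat.one_le_iff_ne_zero, ← Nat.pos_iff_ne_zero]
  exact List.count_pos_iff

end Walks2
/-- Existence assertion of the paper's Lemma 5.1: if the acyclic multigraph
`F` is a sum of `k·T` directed `s`-`t` paths with every vertex lying on at
least `T − log₂ n` of them, and `T > (k+1)·log₂ n`, then there are `k`
directed `s`-`t` paths in `F` covering all vertices and using each edge of
`F` at most `k` times. -/

theorem k_paths_in_acyclic_flow {V : Type*} [Fintype V] [DecidableEq V]
    (s t : V) (hst : s ≠ t) (hn : 2 ≤ Fintype.card V)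
    (k T : ℕ) (hk : 1 ≤ k)
    (hTbig : ((k : ℝ) + 1) * Real.logb 2 (Fintype.card V) < (T : ℝ))
    (F : V → V → ℕ) (hacyc : ¬ HasPosCycle F)
    (D : Fin (k * T) → List V)
    (hends : ∀ i, (D i).head? = some s ∧ (D i).getLast? = some t)
    (hdecomp : ∀ a b, ∑ i, pathEdges (D i) a b = F a b)
    (hcover : ∀ v : V,
      (T : ℝ) - Real.logb 2 (Fintype.card V) ≤
        (({i | v ∈ D i} : Finset (Fin (k * T))).card : ℝ)) :
    ∃ P : Fin k → List V,
      (∀ i, (P i).head? = some s ∧ (P i).getLast? = some t ∧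
        (P i).Chain' (fun a b => 1 ≤ F a b)) ∧
      (∀ v : V, ∃ i, v ∈ P i) ∧
      (∀ a b, ∑ i, pathEdges (P i) a b ≤ k * F a b) := by
  classical
  set L : ℝ := Real.logb 2 (Fintype.card V) with hLdef
  set e : V → V → Prop := fun a b => 1 ≤ F a b with he
  set r : V → V → Prop := Relation.TransGen e with hr
  have htr : Transitive r := fun _ _ _ h h' => Relation.TransGen.trans h h'
  have hirr : Irreflexive r := by
    intro x hx
    obtain ⟨l, hl⟩ := tg_iff_chain.mp hx
    exact hacyc ⟨x, l, hl⟩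
  have hDwalk : ∀ i, IsWalkE e (D i) s t := by
    intro i
    refine ⟨(hends i).1, (hends i).2, ?_⟩
    apply chain'_of_zip
    intro ab hab
    have h1 : 1 ≤ pathEdges (D i) ab.1 ab.2 :=
      pathEdges_pos_iff.mpr (by rwa [Prod.mk.eta])
    show 1 ≤ F ab.1 ab.2
    rw [← hdecomp]
    exact le_trans h1 (Finset.single_le_sum (f := fun j => pathEdges (D j) ab.1 ab.2)
      (fun _ _ => Nat.zero_le _) (Finset.mem_univ i))
  have hL1 : 1 ≤ L := by
    have h2 : Real.logb 2 2 ≤ Real.logb 2 (Fintype.card V) := by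
      apply Real.logb_le_logb_of_le (by norm_num) (by norm_num)
      exact_mod_cast hn
    rw [Real.logb_self_eq_one (by norm_num)] at h2
    exact h2
  have hkR : (1 : ℝ) ≤ (k : ℝ) := by exact_mod_cast hk
  have hTL : 0 < (T : ℝ) - L := by nlinarith
  have hmemD : ∀ v : V, ∃ i, v ∈ D i := by
    intro v
    by_contra hcon
    push_neg at hcon
    have hempty : ({i | v ∈ D i} : Finset (Fin (k * T))) = ∅ := by
      ext i
      simp [hcon i]
    have := hcover v
    rw [hempty] at this
    simp at this
    linarith
  have hreach : ∀ v : V, Relation.ReflTransGen e s v ∧ Relation.ReflTransGen e v t := by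
    intro v
    obtain ⟨i, hi⟩ := hmemD v
    exact ⟨(hDwalk i).head_rtg v hi, (hDwalk i).rtg_last v hi⟩
  have hanti : ∀ A : Finset V, (∀ a ∈ A, ∀ b ∈ A, a ≠ b → ¬ r a b) → A.card ≤ k := by
    intro A hA
    by_contra hcon
    push_neg at hcon
    have hdisj : ∀ a ∈ A, ∀ b ∈ A, a ≠ b →
        Disjoint ({i | a ∈ D i} : Finset (Fin (k * T))) ({i | b ∈ D i} : Finset (Fin (k * T))) := by
      intro a ha b hb hab
      rw [Finset.disjoint_left]
      intro i hia hib
      have hia' : a ∈ D i := by simpa using hia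
      have hib' : b ∈ D i := by simpa using hib
      rcases (hDwalk i).comparable a hia' b hib' with h | h | h
      · exact hab h
      · exact hA a ha b hb hab h
      · exact hA b hb a ha (Ne.symm hab) h
    have hsum : ∑ a ∈ A, (({i | a ∈ D i} : Finset (Fin (k * T))).card) ≤ k * T := by
      rw [← Finset.card_biUnion hdisj]
      calc (A.biUnion fun a => ({i | a ∈ D i} : Finset (Fin (k * T)))).card
          ≤ Fintype.card (Fin (k * T)) := Finset.card_le_univ _
        _ = k * T := by simp
    have hlow : (A.card : ℝ) * ((T : ℝ) - L) ≤ (k * T : ℕ) := by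
      calc (A.card : ℝ) * ((T : ℝ) - L)
          ≤ ∑ a ∈ A, (({i | a ∈ D i} : Finset (Fin (k * T))).card : ℝ) := by
            rw [← nsmul_eq_mul]
            apply Finset.card_nsmul_le_sum
            intro a _
            exact hcover a
        _ ≤ ((k * T : ℕ) : ℝ) := by exact_mod_cast hsum
    have hcardR : (k : ℝ) + 1 ≤ (A.card : ℝ) := by
      have : k + 1 ≤ A.card := hcon
      exact_mod_cast this
    have hTcast : ((k * T : ℕ) : ℝ) = (k : ℝ) * (T : ℝ) := by push_cast; ring
    rw [hTcast] at hlow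
    nlinarith
  obtain ⟨f, hf1, hf2⟩ := dilworth htr hirr Finset.univ k
    (fun A _ hA => hanti A hA)
  have hclass : ∀ i : Fin k, ∃ p, IsWalkE e p s t ∧ ∀ x : V, f x = i.1 → x ∈ p := by
    intro i
    have hCcomp : ∀ a ∈ Finset.univ.filter (fun v => f v = i.1),
        ∀ b ∈ Finset.univ.filter (fun v => f v = i.1), a = b ∨ r a b ∨ r b a := by
      intro a ha b hb
      simp only [Finset.mem_filter, Finset.mem_univ, true_and] at ha hb
      exact hf2 a (Finset.mem_univ a) b (Finset.mem_univ b) (by rw [ha, hb])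
    obtain ⟨l, hlc, hlmem⟩ := finset_chain_to_list htr hirr _ hCcomp
    cases l with
    | nil =>
      obtain ⟨p, hp⟩ := walk_of_rtg (hreach s).2
      refine ⟨p, hp, ?_⟩
      intro x hx
      have : x ∈ ([] : List V) := (hlmem x).mpr (by simp [hx])
      simp at this
    | cons v c =>
      obtain ⟨p2, hp2, hp2mem⟩ := chain_through c v t hlc (fun x _ => (hreach x).2)
      obtain ⟨p1, hp1⟩ := walk_of_rtg (hreach v).1
      obtain ⟨pq, hpq, _, hm2⟩ := hp1.glue hp2
      refine ⟨pq, hpq, ?_⟩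
      intro x hx
      exact hm2 x (hp2mem x ((hlmem x).mpr (by simp [hx])))
  choose P hP1 hP2 using hclass
  refine ⟨P, ?_, ?_, ?_⟩
  · intro i
    exact ⟨(hP1 i).1, (hP1 i).2.1, (hP1 i).2.2⟩
  · intro v
    exact ⟨⟨f v, hf1 v (Finset.mem_univ v)⟩, hP2 _ v rfl⟩
  · intro a b
    by_cases hF : F a b = 0
    · have hz : ∀ i, pathEdges (P i) a b = 0 := by
        intro i
        by_contra h
        have h1 : 1 ≤ pathEdges (P i) a b := Nat.one_le_iff_ne_zero.mpr h
        have h2 : (a, b) ∈ (P i).zip (P i).tail := pathEdges_pos_iff.mp h1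
        have h3 : e a b := zip_mem_chain' (P i) (hP1 i).2.2 (a, b) h2
        rw [he] at h3
        omega
      simp [hz, hF]
    · have h1 : 1 ≤ F a b := Nat.one_le_iff_ne_zero.mpr hF
      calc ∑ i, pathEdges (P i) a b ≤ ∑ _i : Fin k, 1 := by
            apply Finset.sum_le_sum
            intro i _
            exact pathEdges_le_one ((hP1 i).nodup hirr) a b
        _ = k := by simp
        _ ≤ k * F a b := Nat.le_mul_of_pos_right k (by omega)
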